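/- Let Y be a topological space, m, l natural numbers, A = MvPolynomial (Fin m) C(Y, ℝ), and let 𝔞 be an A-submodule of A^l (functions Fin l → A). Then there exists an open dense subset U ⊆ Y such that every x ∈ U has an open neighborhood V for which the submodule of (MvPolynomial (Fin m) C(V, ℝ))^l generated by the componentwise images of the elements of 𝔞 under the coefficientwise restriction homomorphism is a finitely generated module over MvPolynomial (Fin m) C(V, ℝ). -/

import Mathlib

/-- The restriction ring homomorphism `C(Y, ℝ) →+* C(V, ℝ)` for a subset `V ⊆ Y`. -/
def restrictHom {Y : Type*} [TopologicalSpace Y] (V : Set Y) :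
    C(Y, ℝ) →+* C(V, ℝ) where
  toFun f := f.restrict V
  map_one' := rfl
  map_mul' _ _ := rfl
  map_zero' := rfl
  map_add' _ _ := rfl


open scoped MonomialOrder

namespace Stmt10Aux

variable (m l : ℕ)

/-- position-monomial pairs -/
abbrev P := Fin l × (Fin m →₀ ℕ)

noncomputable def mo : MonomialOrder (Fin (m+1)) := MonomialOrder.lex

/-- encode a pair into a monomial in one more variable -/
noncomputable def enc (p : P m l) : Fin (m+1) →₀ ℕ :=
  Finsupp.mapDomain Fin.castSucc p.2 + Finsupp.single (Fin.last m) (p.1 : ℕ)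

lemma enc_last (p : P m l) : enc m l p (Fin.last m) = (p.1 : ℕ) := by
  have h0 : Finsupp.mapDomain (Fin.castSucc (n := m)) p.2 (Fin.last m) = 0 := by
    apply Finsupp.mapDomain_notin_range
    rintro ⟨i, hi⟩
    exact (Fin.castSucc_lt_last i).ne hi
  simp [enc, h0]

lemma enc_inj : Function.Injective (enc m l) := by
  intro p q h
  have hl : (p.1 : ℕ) = (q.1 : ℕ) := by
    rw [← enc_last m l p, ← enc_last m l q, h]
  have h1 : p.1 = q.1 := Fin.val_injective hl
  have h2 : Finsupp.mapDomain (Fin.castSucc (n := m)) p.2 = Finsupp.mapDomain Fin.castSucc q.2 := by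
    have := h
    unfold enc at this
    rw [h1] at this
    exact add_right_cancel this
  have h3 : p.2 = q.2 :=
    Finsupp.mapDomain_injective (Fin.castSucc_injective m) h2
  exact Prod.ext h1 h3

noncomputable def ι (p : P m l) : (mo m).syn := (mo m).toSyn (enc m l p)

lemma ι_inj : Function.Injective (ι m l) :=
  fun _ _ h => enc_inj m l ((mo m).toSyn.injective h)

lemma ι_add (i : Fin l) (α γ : Fin m →₀ ℕ) :
    ι m l (i, α + γ) = ι m l (i, α) + (mo m).toSyn (Finsupp.mapDomain Fin.castSucc γ) := by
  unfold ι enc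
  rw [← map_add]
  congr 1
  simp only [Finsupp.mapDomain_add]
  abel


variable {R : Type*} [CommRing R]

/-- coefficient of a vector of polynomials at a position-monomial pair -/
def cf (u : Fin l → MvPolynomial (Fin m) R) (p : P m l) : R :=
  MvPolynomial.coeff p.2 (u p.1)

variable {m l}

lemma cf_sub (u v : Fin l → MvPolynomial (Fin m) R) (p : P m l) :
    cf m l (u - v) p = cf m l u p - cf m l v p := by
  simp [cf, MvPolynomial.coeff_sub]

lemma cf_monomial_smul (γ : Fin m →₀ ℕ) (a : R) (w : Fin l → MvPolynomial (Fin m) R)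
    (p : P m l) :
    cf m l ((MvPolynomial.monomial γ a) • w) p =
      if γ ≤ p.2 then a * cf m l w (p.1, p.2 - γ) else 0 := by
  simp only [cf, Pi.smul_apply, smul_eq_mul]
  exact MvPolynomial.coeff_monomial_mul' _ _ _ _

/-- the (finite) support of a vector of polynomials, as pairs -/
noncomputable def suppP (u : Fin l → MvPolynomial (Fin m) R) : Finset (P m l) :=
  Finset.univ.biUnion fun i =>
    (u i).support.map ⟨fun α => (i, α), fun a b h => by simpa using congrArg Prod.snd h⟩

lemma mem_suppP (u : Fin l → MvPolynomial (Fin m) R) (p : P m l) :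
    p ∈ suppP u ↔ cf m l u p ≠ 0 := by
  obtain ⟨i, α⟩ := p
  simp only [suppP, Finset.mem_biUnion, Finset.mem_univ, true_and, Finset.mem_map,
    Function.Embedding.coeFn_mk, cf]
  constructor
  · rintro ⟨j, β, hβ, h⟩
    obtain ⟨rfl, rfl⟩ : j = i ∧ β = α := by
      constructor <;> [exact congrArg Prod.fst h; exact congrArg Prod.snd h]
    exact MvPolynomial.mem_support_iff.mp hβ
  · intro h
    exact ⟨i, α, MvPolynomial.mem_support_iff.mpr h, rfl⟩

/-- measure for the division algorithm -/
noncomputable def μ (E : Set (P m l)) [DecidablePred (· ∈ E)]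
    (u : Fin l → MvPolynomial (Fin m) R) :
    WithBot (mo m).syn :=
  ((suppP u).filter (· ∈ E)).sup fun p => (ι m l p : WithBot (mo m).syn)

/-- Division algorithm: reduce `u` modulo the family `w` whose leading coefficients
are units, obtaining a remainder supported away from the leading positions. -/
lemma reduction {k : ℕ} (w : Fin k → (Fin l → MvPolynomial (Fin m) R)) (q : Fin k → P m l)
    (hu : ∀ j, IsUnit (cf m l (w j) (q j)))
    (hz : ∀ j p, ι m l (q j) < ι m l p → cf m l (w j) p = 0)
    (u : Fin l → MvPolynomial (Fin m) R) :
    ∃ r, u - r ∈ Submodule.span (MvPolynomial (Fin m) R) (Set.range w) ∧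
      ∀ p ∈ {p : P m l | ∃ j γ, p = ((q j).1, (q j).2 + γ)}, cf m l r p = 0 := by
  set E : Set (P m l) := {p : P m l | ∃ j γ, p = ((q j).1, (q j).2 + γ)} with hE
  letI : DecidablePred (· ∈ E) := fun _ => Classical.propDecidable _
  suffices H : ∀ d : WithBot (mo m).syn, ∀ u, μ E u = d →
      ∃ r, u - r ∈ Submodule.span (MvPolynomial (Fin m) R) (Set.range w) ∧
        ∀ p ∈ E, cf m l r p = 0 from H _ u rfl
  intro d
  induction d using WellFoundedLT.induction with
  | _ d IH =>
  intro u hd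
  by_cases h0 : (((suppP u).filter (· ∈ E))).Nonempty
  · obtain ⟨p, hpF, hpmax⟩ := Finset.exists_max_image _ (ι m l) h0
    have hpE : p ∈ E := (Finset.mem_filter.mp hpF).2
    have hpsupp : cf m l u p ≠ 0 := (mem_suppP u p).mp (Finset.mem_filter.mp hpF).1
    obtain ⟨j, γ, hp⟩ := hpE
    set c : R := cf m l u p with hc
    set b : R := ↑((hu j).unit⁻¹) with hb
    set u' := u - (MvPolynomial.monomial γ (c * b)) • w j with hu'
    -- key coefficient computations
    have K1 : ∀ p' : P m l, ι m l p < ι m l p' →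
        cf m l ((MvPolynomial.monomial γ (c * b)) • w j) p' = 0 := by
      intro p' hlt
      rw [cf_monomial_smul]
      split_ifs with hle
      · have h2 : ι m l (q j) < ι m l (p'.1, p'.2 - γ) := by
          have e1 : ι m l p = ι m l (q j) +
              (mo m).toSyn (Finsupp.mapDomain Fin.castSucc γ) := by
            rw [hp]; exact ι_add m l _ _ _
          have e2 : ι m l p' = ι m l (p'.1, p'.2 - γ) +
              (mo m).toSyn (Finsupp.mapDomain Fin.castSucc γ) := by
            have : p' = (p'.1, (p'.2 - γ) + γ) := by
              rw [tsub_add_cancel_of_le hle]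
            conv_lhs => rw [this]
            exact ι_add m l _ _ _
          rw [e1, e2] at hlt
          exact lt_of_add_lt_add_right hlt
        rw [hz j _ h2, mul_zero]
      · rfl
    have K2 : cf m l ((MvPolynomial.monomial γ (c * b)) • w j) p = c := by
      rw [cf_monomial_smul, hp]
      have hle : γ ≤ (q j).2 + γ := le_add_self
      rw [if_pos hle]
      have : ((q j).2 + γ) - γ = (q j).2 := by simp
      rw [this]
      have hbc : b * cf m l (w j) (q j) = 1 := (hu j).val_inv_mul
      calc c * b * cf m l (w j) ((q j).1, (q j).2) = c * (b * cf m l (w j) (q j)) := by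
            rw [mul_assoc]
        _ = c := by rw [hbc, mul_one]
    have K3 : ∀ p' ∈ E, ι m l p ≤ ι m l p' → cf m l u' p' = 0 := by
      intro p' hp'E hle
      rcases lt_or_eq_of_le hle with hlt | heq
      · have hns : cf m l u p' = 0 := by
          by_contra hne
          have : p' ∈ (suppP u).filter (· ∈ E) :=
            Finset.mem_filter.mpr ⟨(mem_suppP u p').mpr hne, hp'E⟩
          exact absurd (hpmax _ this) (not_le.mpr hlt)
        rw [hu', cf_sub, hns, K1 _ hlt, sub_zero]
      · have : p' = p := ι_inj m l heq.symm
        rw [this, hu', cf_sub, K2, sub_self]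
    have K4 : μ E u' < d := by
      have hdp : d = ((ι m l p : WithBot (mo m).syn)) := by
        rw [← hd]
        apply le_antisymm
        · exact Finset.sup_le fun p' hp' => WithBot.coe_le_coe.mpr (hpmax _ hp')
        · exact Finset.le_sup (f := fun p => (ι m l p : WithBot (mo m).syn)) hpF
      rw [hdp]
      rw [μ, Finset.sup_lt_iff (by exact WithBot.bot_lt_coe _)]
      intro p' hp'
      have hp'E : p' ∈ E := (Finset.mem_filter.mp hp').2
      have hp'supp : cf m l u' p' ≠ 0 := (mem_suppP u' p').mp (Finset.mem_filter.mp hp').1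
      rcases lt_or_ge (ι m l p') (ι m l p) with h | h
      · exact WithBot.coe_lt_coe.mpr h
      · exact absurd (K3 p' hp'E h) hp'supp
    obtain ⟨r, hr1, hr2⟩ := IH _ K4 u' rfl
    refine ⟨r, ?_, hr2⟩
    have : u - r = (u - u') + (u' - r) := by abel
    rw [this]
    apply Submodule.add_mem
    · have : u - u' = (MvPolynomial.monomial γ (c * b)) • w j := by rw [hu']; abel
      rw [this]
      exact Submodule.smul_mem _ _ (Submodule.subset_span ⟨j, rfl⟩)
    · exact hr1
  · refine ⟨u, by rw [sub_self]; exact Submodule.zero_mem _, fun p hp => ?_⟩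
    by_contra hne
    exact h0 ⟨p, Finset.mem_filter.mpr ⟨(mem_suppP u p).mpr hne, hp⟩⟩

/-- a nowhere-vanishing continuous real function is a unit -/
lemma isUnit_of_ne_zero {X : Type*} [TopologicalSpace X] (f : C(X, ℝ))
    (h : ∀ x, f x ≠ 0) : IsUnit f := by
  refine IsUnit.of_mul_eq_one (a := f) ⟨fun x => (f x)⁻¹, (map_continuous f).inv₀ h⟩ ?_
  ext x
  exact mul_inv_cancel₀ (h x)

variable {Y : Type*} [TopologicalSpace Y]

/-- restriction between open subsets -/
def rr {V' V : Set Y} (h : V' ⊆ V) : C(V, ℝ) →+* C(V', ℝ) where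
  toFun f := f.comp ⟨Set.inclusion h, continuous_inclusion h⟩
  map_one' := rfl
  map_mul' _ _ := rfl
  map_zero' := rfl
  map_add' _ _ := rfl

lemma rr_comp_restrictHom {V' V : Set Y} (h : V' ⊆ V) :
    (rr h).comp (restrictHom V) = restrictHom V' := by
  refine RingHom.ext fun f => ContinuousMap.ext fun x => rfl

variable (m l) in
/-- the coefficientwise restriction, componentwise, as a semilinear map -/
noncomputable def ΦV {V' V : Set Y} (h : V' ⊆ V) :
    (Fin l → MvPolynomial (Fin m) C(V, ℝ)) →ₛₗ[MvPolynomial.map (σ := Fin m) (rr h)]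
      (Fin l → MvPolynomial (Fin m) C(V', ℝ)) where
  toFun u := fun i => MvPolynomial.map (rr h) (u i)
  map_add' u v := funext fun i => by simp [map_add]
  map_smul' a u := funext fun i => by
    simp [Pi.smul_apply, smul_eq_mul, map_mul]

variable (m l) in
/-- restriction from the whole space as a semilinear map -/
noncomputable def ΦY (V : Set Y) :
    (Fin l → MvPolynomial (Fin m) C(Y, ℝ)) →ₛₗ[MvPolynomial.map (σ := Fin m) (restrictHom V)]
      (Fin l → MvPolynomial (Fin m) C(V, ℝ)) where
  toFun u := fun i => MvPolynomial.map (restrictHom V) (u i)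
  map_add' u v := funext fun i => by simp [map_add]
  map_smul' a u := funext fun i => by
    simp [Pi.smul_apply, smul_eq_mul, map_mul]

lemma ΦV_ΦY {V' V : Set Y} (h : V' ⊆ V) (v : Fin l → MvPolynomial (Fin m) C(Y, ℝ)) :
    ΦV m l h (ΦY m l V v) = ΦY m l V' v := by
  funext i
  simp only [ΦV, ΦY, LinearMap.coe_mk, AddHom.coe_mk]
  rw [MvPolynomial.map_map, rr_comp_restrictHom]

/-- semilinear image of a span lands in the span of the image -/
lemma mem_span_of_semilinear {R R' M M' : Type*} [CommRing R] [CommRing R']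
    [AddCommGroup M] [AddCommGroup M'] [Module R M] [Module R' M']
    {τ : R →+* R'} (Φ : M →ₛₗ[τ] M') {s : Set M} {x : M}
    (hx : x ∈ Submodule.span R s) : Φ x ∈ Submodule.span R' (Φ '' s) := by
  induction hx using Submodule.span_induction with
  | mem y hy => exact Submodule.subset_span ⟨y, hy, rfl⟩
  | zero => rw [map_zero]; exact Submodule.zero_mem _
  | add y z _ _ hy hz => rw [map_add]; exact Submodule.add_mem _ hy hz
  | smul a y _ hy => rw [LinearMap.map_smulₛₗ]; exact Submodule.smul_mem _ _ hy

lemma cf_ΦV {V' V : Set Y} (h : V' ⊆ V) (u : Fin l → MvPolynomial (Fin m) C(V, ℝ))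
    (p : P m l) : cf m l (ΦV m l h u) p = rr h (cf m l u p) := by
  simp [ΦV, cf, MvPolynomial.coeff_map]

variable (m l) in
/-- the restricted span of the submodule `𝔞` -/
noncomputable def Sp (𝔞 : Submodule (MvPolynomial (Fin m) C(Y, ℝ))
    (Fin l → MvPolynomial (Fin m) C(Y, ℝ))) (V : Set Y) :
    Submodule (MvPolynomial (Fin m) C(V, ℝ))
      (Fin l → MvPolynomial (Fin m) C(V, ℝ)) :=
  Submodule.span _ (ΦY m l V '' ↑𝔞)

lemma Sp_res {𝔞 : Submodule (MvPolynomial (Fin m) C(Y, ℝ))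
    (Fin l → MvPolynomial (Fin m) C(Y, ℝ))} {V' V : Set Y} (h : V' ⊆ V)
    {x : Fin l → MvPolynomial (Fin m) C(V, ℝ)} (hx : x ∈ Sp m l 𝔞 V) :
    ΦV m l h x ∈ Sp m l 𝔞 V' := by
  have h1 := mem_span_of_semilinear (ΦV m l h) hx
  have h2 : ΦV m l h '' (ΦY m l V '' ↑𝔞) = ΦY m l V' '' ↑𝔞 := by
    rw [Set.image_image]
    exact Set.image_congr fun v _ => ΦV_ΦY h v
  rwa [h2] at h1

variable (m l) (𝔞 : Submodule (MvPolynomial (Fin m) C(Y, ℝ))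
    (Fin l → MvPolynomial (Fin m) C(Y, ℝ))) (W : Set Y)

/-- state of the iterative construction -/
structure St where
  V : Set Y
  ho : IsOpen V
  hne : V.Nonempty
  hsub : V ⊆ W
  L : List ((Fin l → MvPolynomial (Fin m) C(V, ℝ)) × P m l)
  hmem : ∀ x ∈ L, x.1 ∈ Sp m l 𝔞 V
  hunit : ∀ x ∈ L, IsUnit (cf m l x.1 x.2)
  htop : ∀ x ∈ L, ∀ p, ι m l x.2 < ι m l p → cf m l x.1 p = 0
  hpw : (L.map Prod.snd).Pairwise (fun a b => ∀ γ, b ≠ (a.1, a.2 + γ))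

variable {m l 𝔞 W}

lemma step_ex (hbad : ∀ V : Set Y, IsOpen V → V.Nonempty → V ⊆ W → ¬ (Sp m l 𝔞 V).FG)
    (s : St m l 𝔞 W) :
    ∃ t : St m l 𝔞 W, ∃ p : P m l,
      t.L.map Prod.snd = s.L.map Prod.snd ++ [p] := by
  classical
  set k := s.L.length with hk
  set w : Fin k → (Fin l → MvPolynomial (Fin m) C(s.V, ℝ)) := fun j => (s.L.get j).1 with hw
  set q : Fin k → P m l := fun j => (s.L.get j).2 with hq
  have hu : ∀ j, IsUnit (cf m l (w j) (q j)) := fun j => s.hunit _ (List.get_mem s.L j)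
  have hz : ∀ j p, ι m l (q j) < ι m l p → cf m l (w j) p = 0 :=
    fun j => s.htop _ (List.get_mem s.L j)
  have hrange : Set.range w ⊆ (Sp m l 𝔞 s.V : Set _) :=
    fun x ⟨j, hj⟩ => hj ▸ s.hmem _ (List.get_mem s.L j)
  -- find an element of the image not in the span of the current generators
  have hvex : ∃ a ∈ ΦY m l s.V '' ↑𝔞,
      a ∉ Submodule.span (MvPolynomial (Fin m) C(s.V, ℝ)) (Set.range w) := by
    by_contra hcon
    push_neg at hcon
    have heq : Sp m l 𝔞 s.V = Submodule.span _ (Set.range w) :=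
      le_antisymm (Submodule.span_le.mpr hcon) (Submodule.span_le.mpr hrange)
    exact hbad s.V s.ho s.hne s.hsub
      (heq ▸ Submodule.fg_span (Set.finite_range w))
  obtain ⟨u, huim, hunot⟩ := hvex
  obtain ⟨r, hr1, hr2⟩ := reduction w q hu hz u
  have hr0 : r ≠ 0 := by
    rintro rfl
    exact hunot (by simpa using hr1)
  have hrSp : r ∈ Sp m l 𝔞 s.V := by
    have huSp : u ∈ Sp m l 𝔞 s.V := Submodule.subset_span huim
    have : u - r ∈ Sp m l 𝔞 s.V := Submodule.span_le.mpr hrange hr1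
    have := Submodule.sub_mem _ huSp this
    simpa using this
  -- find the leading pair of the remainder
  have hex : ∃ p, cf m l r p ≠ 0 := by
    by_contra hcon
    push_neg at hcon
    apply hr0
    funext i
    apply MvPolynomial.ext
    intro α
    simpa [cf] using hcon (i, α)
  have hne' : (suppP r).Nonempty := by
    obtain ⟨p, hp⟩ := hex
    exact ⟨p, (mem_suppP r p).mpr hp⟩
  obtain ⟨pmax, hpmem, hpmax⟩ := Finset.exists_max_image _ (ι m l) hne'
  have cnz : cf m l r pmax ≠ 0 := (mem_suppP r pmax).mp hpmem
  have hrtop : ∀ p, ι m l pmax < ι m l p → cf m l r p = 0 := by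
    intro p hlt
    by_contra hcon
    exact absurd (hpmax _ ((mem_suppP r p).mpr hcon)) (not_le.mpr hlt)
  have hpE : pmax ∉ {p : P m l | ∃ j γ, p = ((q j).1, (q j).2 + γ)} := by
    intro hmem
    exact cnz (hr2 _ hmem)
  -- shrink the open set to invert the leading coefficient
  set c := cf m l r pmax with hc
  have hcy : ∃ y : s.V, c y ≠ 0 := by
    by_contra hcon
    push_neg at hcon
    exact cnz (ContinuousMap.ext hcon)
  set V' : Set Y := Subtype.val '' {y : s.V | c y ≠ 0} with hV'
  have hV'o : IsOpen V' :=
    s.ho.isOpenMap_subtype_val _ ((map_continuous c).isOpen_preimage _ isOpen_ne)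
  have hV'ne : V'.Nonempty := by
    obtain ⟨y, hy⟩ := hcy
    exact ⟨y, y, hy, rfl⟩
  have h' : V' ⊆ s.V := Subtype.coe_image_subset _ _
  have hcunit : ∀ z : V', rr h' c z ≠ 0 := by
    rintro z
    obtain ⟨y, hy, hyz⟩ := z.2
    have : Set.inclusion h' z = y := Subtype.ext hyz.symm
    show c (Set.inclusion h' z) ≠ 0
    rw [this]
    exact hy
  -- the new list
  set L' : List ((Fin l → MvPolynomial (Fin m) C(V', ℝ)) × P m l) :=
    s.L.map (fun x => (ΦV m l h' x.1, x.2)) ++ [(ΦV m l h' r, pmax)] with hL'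
  have hmap : L'.map Prod.snd = s.L.map Prod.snd ++ [pmax] := by
    simp [hL', List.map_map, Function.comp_def]
  have hmem' : ∀ x ∈ L', x.1 ∈ Sp m l 𝔞 V' := by
    intro x hx
    rcases List.mem_append.mp hx with hx | hx
    · obtain ⟨y, hy, rfl⟩ := List.mem_map.mp hx
      exact Sp_res h' (s.hmem y hy)
    · rw [List.mem_singleton.mp hx]
      exact Sp_res h' hrSp
  have hunit' : ∀ x ∈ L', IsUnit (cf m l x.1 x.2) := by
    intro x hx
    rcases List.mem_append.mp hx with hx | hx
    · obtain ⟨y, hy, rfl⟩ := List.mem_map.mp hx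
      show IsUnit (cf m l (ΦV m l h' y.1) y.2)
      rw [cf_ΦV]
      exact (s.hunit y hy).map _
    · rw [List.mem_singleton.mp hx]
      show IsUnit (cf m l (ΦV m l h' r) pmax)
      rw [cf_ΦV]
      exact isUnit_of_ne_zero _ hcunit
  have htop' : ∀ x ∈ L', ∀ p, ι m l x.2 < ι m l p → cf m l x.1 p = 0 := by
    intro x hx p hp
    rcases List.mem_append.mp hx with hx | hx
    · obtain ⟨y, hy, rfl⟩ := List.mem_map.mp hx
      show cf m l (ΦV m l h' y.1) p = 0
      rw [cf_ΦV, s.htop y hy p hp, map_zero]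
    · rw [List.mem_singleton.mp hx] at hp ⊢
      show cf m l (ΦV m l h' r) p = 0
      rw [cf_ΦV, hrtop p hp, map_zero]
  have hpw' : (L'.map Prod.snd).Pairwise (fun a b => ∀ γ, b ≠ (a.1, a.2 + γ)) := by
    rw [hmap]
    rw [List.pairwise_append]
    refine ⟨s.hpw, List.pairwise_singleton _ _, ?_⟩
    intro a ha b hb γ hbeq
    rw [List.mem_singleton.mp hb] at hbeq
    obtain ⟨x, hxL, hxa⟩ := List.mem_map.mp ha
    obtain ⟨j, hj⟩ := List.mem_iff_get.mp hxL
    exact hpE ⟨j, γ, by rw [hbeq, ← hxa, ← hj]⟩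
  exact ⟨⟨V', hV'o, hV'ne, h'.trans s.hsub, L', hmem', hunit', htop', hpw'⟩, pmax, hmap⟩

lemma claimA (hWo : IsOpen W) (hWne : W.Nonempty) :
    ∃ V : Set Y, IsOpen V ∧ V.Nonempty ∧ V ⊆ W ∧ (Sp m l 𝔞 V).FG := by
  classical
  by_contra hcon
  push_neg at hcon
  have hbad : ∀ V : Set Y, IsOpen V → V.Nonempty → V ⊆ W → ¬ (Sp m l 𝔞 V).FG :=
    fun V h1 h2 h3 => hcon V h1 h2 h3
  set stepFn : St m l 𝔞 W → St m l 𝔞 W := fun s => (step_ex hbad s).choose with hstepFn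
  set pFn : St m l 𝔞 W → P m l := fun s => (step_ex hbad s).choose_spec.choose with hpFn
  have hspec : ∀ s : St m l 𝔞 W,
      (stepFn s).L.map Prod.snd = s.L.map Prod.snd ++ [pFn s] :=
    fun s => (step_ex hbad s).choose_spec.choose_spec
  set s₀ : St m l 𝔞 W := ⟨W, hWo, hWne, subset_rfl, [], by simp, by simp, by simp,
    by simp⟩ with hs₀
  set sq : ℕ → St m l 𝔞 W := fun n => stepFn^[n] s₀ with hsq
  set Qs : ℕ → List (P m l) := fun n => (sq n).L.map Prod.snd with hQs
  set f : ℕ → P m l := fun n => pFn (sq n) with hf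
  have hQsucc : ∀ n, Qs (n + 1) = Qs n ++ [f n] := by
    intro n
    show ((stepFn^[n+1]) s₀).L.map Prod.snd = _
    rw [Function.iterate_succ_apply']
    exact hspec (sq n)
  have hpre : ∀ i j, i ≤ j → Qs i <+: Qs j := by
    intro i j hij
    induction j with
    | zero => rw [Nat.le_zero.mp hij]
    | succ j ih =>
      rcases Nat.lt_or_ge i (j+1) with h | h
      · have := ih (Nat.lt_succ_iff.mp h)
        rw [hQsucc j]
        exact this.trans (List.prefix_append _ _)
      · rw [Nat.le_antisymm hij h]
  have hfmem : ∀ i, f i ∈ Qs (i + 1) := by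
    intro i
    rw [hQsucc i]
    exact List.mem_append_right _ (List.mem_singleton.mpr rfl)
  have key : ∀ i j, i < j → ∀ γ, f j ≠ ((f i).1, (f i).2 + γ) := by
    intro i j hij
    have h1 : f i ∈ Qs j := (hpre (i+1) j hij).subset (hfmem i)
    have h2 := (sq (j+1)).hpw
    rw [show (sq (j+1)).L.map Prod.snd = Qs (j+1) from rfl, hQsucc j,
      List.pairwise_append] at h2
    exact h2.2.2 _ h1 _ (List.mem_singleton.mpr rfl)
  -- derive a contradiction from Dickson's lemma
  obtain ⟨b, hb⟩ := Finite.exists_infinite_fiber (fun n => (f n).1)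
  set s : Set ℕ := (fun n => (f n).1) ⁻¹' {b} with hs
  haveI : Infinite s := hb
  set e : ℕ ↪o ℕ := Nat.orderEmbeddingOfSet s with he
  have hes : ∀ n, e n ∈ s := fun n => by
    rw [Nat.orderEmbeddingOfSet_apply]
    exact (Nat.Subtype.ofNat s n).2
  have hmono : StrictMono e := e.strictMono
  obtain ⟨i, j, hij, hle⟩ := (Set.isPWO_of_wellQuasiOrderedLE (Set.univ : Set (Fin m →₀ ℕ))).exists_lt
    (f := fun n => (f (e n)).2) (fun n => Set.mem_univ _)
  have hfst : (f (e i)).1 = (f (e j)).1 := by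
    have h1 : (f (e i)).1 = b := hes i
    have h2 : (f (e j)).1 = b := hes j
    rw [h1, h2]
  refine key (e i) (e j) (hmono hij) ((f (e j)).2 - (f (e i)).2) ?_
  refine Prod.ext hfst.symm ?_
  exact (add_tsub_cancel_of_le hle).symm

end Stmt10Aux

open Stmt10Aux in
/-- semi-Noetherian property for submodules: let
`A = MvPolynomial (Fin m) C(Y, ℝ)` and let `𝔞` be an `A`-submodule of `A^l`. Then
there is an open dense set `U ⊆ Y` such that every `x ∈ U` has an open neighborhood
`V` for which the submodule of `(MvPolynomial (Fin m) C(V, ℝ))^l` generated by the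
componentwise images of elements of `𝔞` under coefficientwise restriction is a
finitely generated module over `MvPolynomial (Fin m) C(V, ℝ)`. -/
theorem stmt10 {Y : Type*} [TopologicalSpace Y] (m l : ℕ)
    (𝔞 : Submodule (MvPolynomial (Fin m) C(Y, ℝ))
      (Fin l → MvPolynomial (Fin m) C(Y, ℝ))) :
    ∃ U : Set Y, IsOpen U ∧ Dense U ∧ ∀ x ∈ U, ∃ V : Set Y, IsOpen V ∧ x ∈ V ∧
      (Submodule.span (MvPolynomial (Fin m) C(V, ℝ))
        ((fun (v : Fin l → MvPolynomial (Fin m) C(Y, ℝ)) (i : Fin l) =>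
            MvPolynomial.map (σ := Fin m) (restrictHom V) (v i)) ''
          (𝔞 : Set (Fin l → MvPolynomial (Fin m) C(Y, ℝ))))).FG := by
  classical
  have hSp : ∀ V : Set Y, Sp m l 𝔞 V =
      Submodule.span (MvPolynomial (Fin m) C(V, ℝ))
        ((fun (v : Fin l → MvPolynomial (Fin m) C(Y, ℝ)) (i : Fin l) =>
            MvPolynomial.map (σ := Fin m) (restrictHom V) (v i)) ''
          (𝔞 : Set (Fin l → MvPolynomial (Fin m) C(Y, ℝ)))) := fun V => rfl
  refine ⟨⋃₀ {V | IsOpen V ∧ (Sp m l 𝔞 V).FG}, isOpen_sUnion (fun V hV => hV.1), ?_, ?_⟩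
  · rw [dense_iff_inter_open]
    intro W hWo hWne
    obtain ⟨V, h1, h2, h3, h4⟩ := claimA (𝔞 := 𝔞) (W := W) hWo hWne
    exact ⟨h2.choose, ⟨h3 h2.choose_spec, V, ⟨h1, h4⟩, h2.choose_spec⟩⟩
  · rintro x ⟨V, ⟨hVo, hVfg⟩, hxV⟩
    exact ⟨V, hVo, hxV, hSp V ▸ hVfg⟩
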